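/- Characterization of nonnegative martingales under conditional symmetry (sufficiency): let 𝒮 be the family of probability measures under which each observation X_t is, conditionally on F_{t−1}, symmetric around 0. Suppose (f_t) is a sequence of nonnegative predictable functions with f_t(x) + f_t(−x) = 2 for all x ∈ ℝ and t. Then M_t := Π_{s≤t} f_s(X_s) is a nonnegative martingale under every Q ∈ 𝒮 (with M_0 = 1). -/

import Mathlib

open MeasureTheory Filter Set
open scoped ENNReal

/-- If two real random variables `Y, Z` have the same joint law with the identity w.r.t. a
sub-σ-algebra `m` (tested on rectangles), then integrals of jointly measurable
functions of `(ω, Y ω)` and `(ω, Z ω)` agree. -/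
lemma integral_comp_eq_of_rect {Ω : Type*} {m : MeasurableSpace Ω} {m0 : MeasurableSpace Ω}
    (hm : m ≤ m0) (μ : Measure Ω) [IsProbabilityMeasure μ]
    (Y Z : Ω → ℝ) (hY : Measurable Y) (hZ : Measurable Z)
    (h : ∀ A : Set Ω, MeasurableSet[m] A → ∀ B : Set ℝ, MeasurableSet B →
      μ (A ∩ Y ⁻¹' B) = μ (A ∩ Z ⁻¹' B))
    (F : Ω × ℝ → ℝ) (hF : StronglyMeasurable[m.prod (borel ℝ)] F) :
    ∫ ω, F (ω, Y ω) ∂μ = ∫ ω, F (ω, Z ω) ∂μ := by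
  letI : MeasurableSpace (Ω × ℝ) := m.prod (borel ℝ)
  have hmapY : Measurable (fun ω => (ω, Y ω)) :=
    Measurable.prodMk (measurable_id'' hm) (hY.mono le_rfl le_rfl)
  have hmapZ : Measurable (fun ω => (ω, Z ω)) :=
    Measurable.prodMk (measurable_id'' hm) (hZ.mono le_rfl le_rfl)
  have hν : μ.map (fun ω => (ω, Y ω)) = μ.map (fun ω => (ω, Z ω)) := by
    have hgen : (MeasurableSpace.prod m (borel ℝ)) = MeasurableSpace.generateFrom
        (image2 (· ×ˢ ·) { s : Set Ω | MeasurableSet[m] s }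
          { t : Set ℝ | MeasurableSet[borel ℝ] t }) :=
      (@generateFrom_prod Ω ℝ m (borel ℝ)).symm
    haveI : IsFiniteMeasure (μ.map (fun ω => (ω, Y ω))) := Measure.isFiniteMeasure_map μ _
    refine ext_of_generate_finite _ hgen (@isPiSystem_prod Ω ℝ m (borel ℝ)) ?_ ?_
    · rintro S ⟨A, hA, B, hB, rfl⟩
      have hAB : MeasurableSet[m.prod (borel ℝ)] (A ×ˢ B) :=
        @MeasurableSet.prod Ω ℝ m (borel ℝ) A B hA hB
      rw [Measure.map_apply hmapY hAB, Measure.map_apply hmapZ hAB]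
      have h1 : (fun ω => (ω, Y ω)) ⁻¹' (A ×ˢ B) = A ∩ Y ⁻¹' B := by
        ext ω; simp [Set.mem_prod]
      have h2 : (fun ω => (ω, Z ω)) ⁻¹' (A ×ˢ B) = A ∩ Z ⁻¹' B := by
        ext ω; simp [Set.mem_prod]
      rw [h1, h2]
      exact h A hA B hB
    · rw [Measure.map_apply hmapY MeasurableSet.univ,
        Measure.map_apply hmapZ MeasurableSet.univ]
      simp
  calc ∫ ω, F (ω, Y ω) ∂μ = ∫ q, F q ∂(μ.map (fun ω => (ω, Y ω))) :=
        (integral_map hmapY.aemeasurable hF.aestronglyMeasurable).symm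
    _ = ∫ q, F q ∂(μ.map (fun ω => (ω, Z ω))) := by rw [hν]
    _ = ∫ ω, F (ω, Z ω) ∂μ := integral_map hmapZ.aemeasurable hF.aestronglyMeasurable

/-- Sufficiency part of the characterization of nonnegative martingales under
conditional symmetry: if `(f_t)` is a sequence of nonnegative predictable functions
(jointly measurable in the past and the argument) satisfying
`f_t(ω, x) + f_t(ω, −x) = 2`, then `M_t := Π_{s≤t} f_s(ω, X_s)` (with `M_0 = 1`) is a
nonnegative martingale under every law `μ` making each `X_t` conditionally symmetric
around `0` given `ℱ_{t-1}`. -/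
theorem product_martingale_of_conditional_symmetry {Ω : Type*} {m0 : MeasurableSpace Ω}
    (ℱ : Filtration ℕ m0) (X : ℕ → Ω → ℝ)
    (hX : ∀ t : ℕ, StronglyMeasurable[ℱ (t + 1)] (X (t + 1)))
    (f : ℕ → Ω → ℝ → ℝ)
    (hfmeas : ∀ t : ℕ,
      StronglyMeasurable[(ℱ t).prod (borel ℝ)] (fun q : Ω × ℝ => f (t + 1) q.1 q.2))
    (hfpos : ∀ t ω x, 0 ≤ f t ω x)
    (hfsym : ∀ t ω x, f t ω x + f t ω (-x) = 2)
    (μ : Measure Ω) [IsProbabilityMeasure μ]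
    (hsym : ∀ (t : ℕ) (g : ℝ → ℝ), Measurable g → (∃ C, ∀ x, |g x| ≤ C) →
      μ[fun ω => g (X (t + 1) ω) | ℱ t] =ᵐ[μ] μ[fun ω => g (-X (t + 1) ω) | ℱ t]) :
    Martingale (fun t ω => ∏ s ∈ Finset.range t, f (s + 1) ω (X (s + 1) ω)) ℱ μ ∧
    ∀ t ω, 0 ≤ ∏ s ∈ Finset.range t, f (s + 1) ω (X (s + 1) ω) := by
  have hfle : ∀ t ω x, f t ω x ≤ 2 := by
    intro t ω x
    nlinarith [hfsym t ω x, hfpos t ω (-x)]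
  set Yf : ℕ → Ω → ℝ := fun t ω => f (t + 1) ω (X (t + 1) ω) with hYfdef
  have hXm : ∀ t, Measurable (X (t + 1)) := fun t => ((hX t).mono (ℱ.le _)).measurable
  -- strong measurability of each factor
  have hYfm : ∀ t, StronglyMeasurable[ℱ (t + 1)] (Yf t) := by
    intro t
    have hpair : @Measurable Ω (Ω × ℝ) (ℱ (t + 1)) ((ℱ t).prod (borel ℝ))
        (fun ω => (ω, X (t + 1) ω)) :=
      Measurable.prodMk (measurable_id'' (ℱ.mono (Nat.le_succ t))) ((hX t).measurable)
    exact (hfmeas t).comp_measurable hpair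
  have hYfint : ∀ t, Integrable (Yf t) μ := fun t =>
    Integrable.mono' (integrable_const 2)
      ((hYfm t).mono (ℱ.le _)).aestronglyMeasurable
      (ae_of_all _ fun ω => by
        rw [Real.norm_eq_abs, abs_of_nonneg (hfpos _ _ _)]; exact hfle _ _ _)
  -- the mirrored factor
  set Zf : ℕ → Ω → ℝ := fun t ω => f (t + 1) ω (-X (t + 1) ω) with hZfdef
  have hZfm : ∀ t, StronglyMeasurable[ℱ (t + 1)] (Zf t) := by
    intro t
    have hpair : @Measurable Ω (Ω × ℝ) (ℱ (t + 1)) ((ℱ t).prod (borel ℝ))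
        (fun ω => (ω, -X (t + 1) ω)) :=
      Measurable.prodMk (measurable_id'' (ℱ.mono (Nat.le_succ t))) ((hX t).measurable.neg)
    exact (hfmeas t).comp_measurable hpair
  have hZfint : ∀ t, Integrable (Zf t) μ := fun t =>
    Integrable.mono' (integrable_const 2)
      ((hZfm t).mono (ℱ.le _)).aestronglyMeasurable
      (ae_of_all _ fun ω => by
        rw [Real.norm_eq_abs, abs_of_nonneg (hfpos _ _ _)]; exact hfle _ _ _)
  -- the rectangle identity from conditional symmetry
  have hrect : ∀ t (A : Set Ω), MeasurableSet[ℱ t] A → ∀ B : Set ℝ, MeasurableSet B →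
      μ (A ∩ X (t + 1) ⁻¹' B) = μ (A ∩ (fun ω => -X (t + 1) ω) ⁻¹' B) := by
    intro t A hA B hB
    set g : ℝ → ℝ := B.indicator 1 with hgdef
    have hgm : Measurable g := measurable_const.indicator hB
    have hgb : ∃ C, ∀ x, |g x| ≤ C :=
      ⟨1, fun x => by by_cases h : x ∈ B <;> simp [hgdef, Set.indicator_apply, h]⟩
    have h1 : Integrable (fun ω => g (X (t + 1) ω)) μ :=
      Integrable.mono' (integrable_const 1)
        (hgm.comp (hXm t)).aestronglyMeasurable
        (ae_of_all _ fun ω => by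
          by_cases h : X (t + 1) ω ∈ B <;> simp [hgdef, Set.indicator_apply, h])
    have h2 : Integrable (fun ω => g (-X (t + 1) ω)) μ :=
      Integrable.mono' (integrable_const 1)
        (hgm.comp (hXm t).neg).aestronglyMeasurable
        (ae_of_all _ fun ω => by
          by_cases h : -X (t + 1) ω ∈ B <;> simp [hgdef, Set.indicator_apply, h])
    have hint_eq : ∫ ω in A, g (X (t + 1) ω) ∂μ = ∫ ω in A, g (-X (t + 1) ω) ∂μ := by
      rw [← setIntegral_condExp (ℱ.le t) h1 hA, ← setIntegral_condExp (ℱ.le t) h2 hA]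
      exact integral_congr_ae (ae_restrict_of_ae (hsym t g hgm hgb))
    have hiY : (fun ω => g (X (t + 1) ω)) = (X (t + 1) ⁻¹' B).indicator (fun _ => (1 : ℝ)) := by
      funext ω; by_cases h : X (t + 1) ω ∈ B <;>
        simp [hgdef, Set.indicator_apply, h]
    have hiZ : (fun ω => g (-X (t + 1) ω)) =
        ((fun ω => -X (t + 1) ω) ⁻¹' B).indicator (fun _ => (1 : ℝ)) := by
      funext ω; by_cases h : -X (t + 1) ω ∈ B <;>
        simp [hgdef, Set.indicator_apply, h]
    rw [hiY, hiZ, setIntegral_indicator ((hXm t) hB),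
      setIntegral_indicator (t := (fun ω => -X (t + 1) ω) ⁻¹' B) ((hXm t).neg hB), setIntegral_const, setIntegral_const] at hint_eq
    have := hint_eq
    simp only [smul_eq_mul, mul_one] at this
    exact (ENNReal.toReal_eq_toReal_iff' (measure_ne_top μ _) (measure_ne_top μ _)).mp this
  -- conditional expectation of each factor is 1
  have hcond : ∀ t, (fun _ : Ω => (1 : ℝ)) =ᵐ[μ] μ[Yf t | ℱ t] := by
    intro t
    refine ae_eq_condExp_of_forall_setIntegral_eq (ℱ.le t) (hYfint t)
      (fun s _ hμs => (integrableOn_const hμs.ne)) (fun s hs _ => ?_)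
      aestronglyMeasurable_const
    -- ⊢ ∫ x in s, 1 ∂μ = ∫ x in s, Yf t x ∂μ
    have hF : StronglyMeasurable[(ℱ t).prod (borel ℝ)]
        (fun q : Ω × ℝ => s.indicator (1 : Ω → ℝ) q.1 * f (t + 1) q.1 q.2) := by
      have hfst : StronglyMeasurable[(ℱ t).prod (borel ℝ)]
          (fun q : Ω × ℝ => s.indicator (1 : Ω → ℝ) q.1) :=
        (stronglyMeasurable_const.indicator hs).comp_measurable
          (@measurable_fst Ω ℝ (ℱ t) (borel ℝ))
      exact hfst.mul (hfmeas t)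
    have heq := integral_comp_eq_of_rect (ℱ.le t) μ (X (t + 1)) (fun ω => -X (t + 1) ω)
      (hXm t) (hXm t).neg (hrect t) _ hF
    have hindY : (fun ω => s.indicator (1 : Ω → ℝ) ω * f (t + 1) ω (X (t + 1) ω)) =
        s.indicator (Yf t) := by
      funext ω; by_cases h : ω ∈ s <;> simp [Set.indicator_apply, h, hYfdef]
    have hindZ : (fun ω => s.indicator (1 : Ω → ℝ) ω * f (t + 1) ω (-X (t + 1) ω)) =
        s.indicator (Zf t) := by
      funext ω; by_cases h : ω ∈ s <;> simp [Set.indicator_apply, h, hZfdef]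
    have heq' : ∫ ω in s, Yf t ω ∂μ = ∫ ω in s, Zf t ω ∂μ := by
      rw [← integral_indicator (ℱ.le t s hs), ← integral_indicator (ℱ.le t s hs),
        ← hindY, ← hindZ]
      exact heq
    have hsum : ∫ ω in s, Yf t ω ∂μ + ∫ ω in s, Zf t ω ∂μ = 2 * (μ s).toReal := by
      rw [← integral_add ((hYfint t).integrableOn) ((hZfint t).integrableOn)]
      have : (fun ω => Yf t ω + Zf t ω) = fun _ => (2 : ℝ) := by
        funext ω; exact hfsym (t + 1) ω (X (t + 1) ω)
      rw [this, setIntegral_const]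
      simp [mul_comm, measureReal_def]
    rw [setIntegral_const]
    simp only [smul_eq_mul, mul_one, measureReal_def]
    linarith [heq', hsum]
  -- the product process
  have hMm : ∀ n, StronglyMeasurable[ℱ n]
      (fun ω => ∏ s ∈ Finset.range n, f (s + 1) ω (X (s + 1) ω)) := by
    intro n
    apply Finset.stronglyMeasurable_fun_prod
    intro s hs
    exact (hYfm s).mono (ℱ.mono (Finset.mem_range.mp hs))
  have hMnonneg : ∀ n ω, 0 ≤ ∏ s ∈ Finset.range n, f (s + 1) ω (X (s + 1) ω) :=
    fun n ω => Finset.prod_nonneg fun s _ => hfpos _ _ _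
  have hMint : ∀ n, Integrable (fun ω => ∏ s ∈ Finset.range n, f (s + 1) ω (X (s + 1) ω)) μ := by
    intro n
    refine Integrable.mono' (integrable_const ((2 : ℝ) ^ n))
      ((hMm n).mono (ℱ.le n)).aestronglyMeasurable (ae_of_all _ fun ω => ?_)
    rw [Real.norm_eq_abs, abs_of_nonneg (hMnonneg n ω)]
    calc ∏ s ∈ Finset.range n, f (s + 1) ω (X (s + 1) ω)
        ≤ ∏ _s ∈ Finset.range n, (2 : ℝ) :=
          Finset.prod_le_prod (fun s _ => hfpos _ _ _) (fun s _ => hfle _ _ _)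
      _ = 2 ^ n := by simp
  refine ⟨martingale_nat (fun n => hMm n) hMint ?_, hMnonneg⟩
  intro n
  have hM1 : (fun ω => ∏ s ∈ Finset.range (n + 1), f (s + 1) ω (X (s + 1) ω)) =
      (fun ω => ∏ s ∈ Finset.range n, f (s + 1) ω (X (s + 1) ω)) * Yf n := by
    funext ω
    simp [Finset.prod_range_succ, hYfdef]
  rw [hM1]
  have hpull := condExp_mul_of_stronglyMeasurable_left (hMm n)
    (by rw [← hM1]; exact hMint (n + 1)) (hYfint n)
  refine EventuallyEq.trans ?_ hpull.symm
  filter_upwards [hcond n] with ω hω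
  simp only [Pi.mul_apply]
  rw [← hω, mul_one]
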